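/- Let G be a group generated by a finite symmetric set S, let d, w ∈ ℕ, and let A be a d×d matrix over ℂ[G] whose entries all have support contained in B_w. Let (F_n) be a Følner exhaustion of G such that dim V(F_n)/|F_n| → c ∈ ℝ. Then for all δ > 0 and ε with 0 < ε < 1 there exist L ∈ ℕ and δ' > 0 such that every nonempty finite subset Y ⊆ G with |Ω_L(Y)| > (1−δ')|Y| satisfies dim V(Y)/|Y| ≤ (1 − ε)⁻¹(c + δ) + ε. -/

import Mathlib

open Pointwise Filter Topology

section Defs

variable {G : Type*} [Group G]

/-- The word ball of radius `k` with respect to the generating set `S`. -/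
noncomputable def wball (S : Finset G) (k : ℕ) : Finset G :=
  letI := Classical.decEq G
  (insert (1 : G) S) ^ k

/-- The `k`-neighborhood `B_k(F) = B_k * F` of a finite set `F`. -/
noncomputable def wnbhd (S : Finset G) (k : ℕ) (F : Finset G) : Finset G :=
  letI := Classical.decEq G
  wball S k * F

/-- The `k`-interior `Ω_k(F)` of a finite set `F`. -/
noncomputable def winter (S : Finset G) (k : ℕ) (F : Finset G) : Finset G :=
  letI := Classical.decEq G
  F.filter fun p => wball S k * {p} ⊆ F

/-- The boundary `∂F` of a finite set `F`. -/
noncomputable def wbdry (S : Finset G) (F : Finset G) : Finset G :=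
  letI := Classical.decEq G
  F.filter fun p => ∃ s ∈ S, s * p ∉ F

/-- `S` is a finite symmetric generating set. -/
def IsSymmGen (S : Finset G) : Prop :=
  (∀ s ∈ S, s⁻¹ ∈ S) ∧ Subgroup.closure (S : Set G) = ⊤

/-- A Følner exhaustion of `G`. -/
def IsFolnerExhaustion (S : Finset G) (F : ℕ → Finset G) : Prop :=
  (1 : G) ∈ F 0 ∧ Monotone F ∧ (∀ g : G, ∃ n, g ∈ F n) ∧
    Filter.Tendsto (fun n => ((wbdry S (F n)).card : ℝ) / ((F n).card : ℝ))
      Filter.atTop (nhds 0)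

variable {d : ℕ}

/-- The space of vectors supported in `Fs` such that `A.mulVec f` vanishes on `Fv`. -/
noncomputable def kerOn (A : Matrix (Fin d) (Fin d) (MonoidAlgebra ℂ G))
    (Fs Fv : Finset G) : Submodule ℂ (Fin d → MonoidAlgebra ℂ G) where
  carrier := {f | (∀ i, (f i).coeff.support ⊆ Fs) ∧ ∀ i, ∀ g ∈ Fv, (A.mulVec f i).coeff g = 0}
  zero_mem' := ⟨fun i => by simp, fun i g hg => by simp [Matrix.mulVec_zero]⟩
  add_mem' := by
    classical
    rintro f g ⟨hf1, hf2⟩ ⟨hg1, hg2⟩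
    constructor
    · intro i
      exact (Finsupp.support_add (g₁ := (f i).coeff) (g₂ := (g i).coeff)).trans
        (Finset.union_subset (hf1 i) (hg1 i))
    · intro i x hx
      have h : A.mulVec (f + g) = A.mulVec f + A.mulVec g := Matrix.mulVec_add A f g
      rw [h]
      show (A.mulVec f i + A.mulVec g i).coeff x = 0
      rw [MonoidAlgebra.coeff_add, Finsupp.add_apply, hf2 i x hx, hg2 i x hx, add_zero]
  smul_mem' := by
    classical
    rintro c f ⟨hf1, hf2⟩
    constructor
    · intro i
      exact (Finsupp.support_smul (b := c) (g := (f i).coeff)).trans (hf1 i)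
    · intro i x hx
      have h : A.mulVec (c • f) = c • A.mulVec f := Matrix.mulVec_smul A c f
      rw [h]
      show (c • A.mulVec f i).coeff x = 0
      rw [MonoidAlgebra.coeff_smul, Finsupp.smul_apply, hf2 i x hx, smul_zero]

/-- The space of vectors supported in `Fs` with `A.mulVec f = 0`. -/
noncomputable def kerAll (A : Matrix (Fin d) (Fin d) (MonoidAlgebra ℂ G))
    (Fs : Finset G) : Submodule ℂ (Fin d → MonoidAlgebra ℂ G) where
  carrier := {f | (∀ i, (f i).coeff.support ⊆ Fs) ∧ A.mulVec f = 0}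
  zero_mem' := ⟨fun i => by simp, Matrix.mulVec_zero A⟩
  add_mem' := by
    classical
    rintro f g ⟨hf1, hf2⟩ ⟨hg1, hg2⟩
    exact ⟨fun i => (Finsupp.support_add (g₁ := (f i).coeff) (g₂ := (g i).coeff)).trans
        (Finset.union_subset (hf1 i) (hg1 i)),
      by rw [Matrix.mulVec_add, hf2, hg2, add_zero]⟩
  smul_mem' := by
    classical
    rintro c f ⟨hf1, hf2⟩
    exact ⟨fun i => (Finsupp.support_smul (b := c) (g := (f i).coeff)).trans (hf1 i),
      by rw [Matrix.mulVec_smul, hf2, smul_zero]⟩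

/-- `V(F)`. -/
noncomputable def VSpace (A : Matrix (Fin d) (Fin d) (MonoidAlgebra ℂ G)) (F : Finset G) :
    Submodule ℂ (Fin d → MonoidAlgebra ℂ G) :=
  kerOn A F F

/-- `Z(F)`. -/
noncomputable def ZSpace (S : Finset G) (w : ℕ) (A : Matrix (Fin d) (Fin d) (MonoidAlgebra ℂ G))
    (F : Finset G) : Submodule ℂ (Fin d → MonoidAlgebra ℂ G) :=
  kerOn A (wnbhd S w F) F

/-- `W(F)`. -/
noncomputable def WSpace (S : Finset G) (w : ℕ) (A : Matrix (Fin d) (Fin d) (MonoidAlgebra ℂ G))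
    (F : Finset G) : Submodule ℂ (Fin d → MonoidAlgebra ℂ G) :=
  kerAll A (winter S w F)

/-- `A.mulVec` as a `ℂ`-linear map. -/
noncomputable def mulVecL {R : Type*} [Ring R] [Algebra ℂ R] {d : ℕ}
    (A : Matrix (Fin d) (Fin d) R) : (Fin d → R) →ₗ[ℂ] (Fin d → R) where
  toFun := A.mulVec
  map_add' := Matrix.mulVec_add A
  map_smul' c v := Matrix.mulVec_smul A c v

/-- Coordinatewise restriction to `F` (multiplication by the indicator of `F`). -/
noncomputable def restrictTo (d : ℕ) (F : Finset G) :
    (Fin d → MonoidAlgebra ℂ G) →ₗ[ℂ] (Fin d → MonoidAlgebra ℂ G) :=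
  letI := Classical.decEq G
  { toFun := fun f i => MonoidAlgebra.ofCoeff ((f i).coeff.filter (· ∈ F))
    map_add' := fun f g => by
      funext i
      exact congrArg MonoidAlgebra.ofCoeff Finsupp.filter_add
    map_smul' := fun c f => by
      funext i
      exact congrArg MonoidAlgebra.ofCoeff Finsupp.filter_smul }

end Defs

section Tiling

variable {ι α : Type*}

/-- An `ε`-disjoint family of finite sets. -/
def EpsDisjoint (I : Finset ι) (A : ι → Finset α) (ε : ℝ) : Prop :=
  ∃ Ab : ι → Finset α, (∀ i ∈ I, Ab i ⊆ A i) ∧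
    (∀ i ∈ I, ((1 - ε) * (A i).card : ℝ) ≤ ((Ab i).card : ℝ)) ∧
    ∀ i ∈ I, ∀ j ∈ I, i ≠ j → Disjoint (Ab i) (Ab j)

/-- The family `(A i)_{i ∈ I}` `a`-covers `X`. -/
def CoversFrac (I : Finset ι) (A : ι → Finset α) (X : Finset α) (a : ℝ) : Prop :=
  letI := Classical.decEq α
  (a * X.card : ℝ) ≤ ((X ∩ I.biUnion A).card : ℝ)

/-- The family `(A i)_{i ∈ I}` `δ`-evenly covers `X`. -/
def EvenCovering (I : Finset ι) (A : ι → Finset α) (X : Finset α) (δ : ℝ) : Prop :=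
  letI := Classical.decEq α
  ∃ M : ℕ, 1 ≤ M ∧ (∀ p ∈ X, (I.filter fun i => p ∈ A i).card ≤ M) ∧
    ((1 - δ) * M * X.card : ℝ) ≤ ∑ i ∈ I, ((A i).card : ℝ)

/-- The right translate `H·x`. -/
noncomputable def rtrans [Mul α] (H : Finset α) (x : α) : Finset α :=
  letI := Classical.decEq α
  H.image (· * x)

end Tiling

section Supp

variable {G : Type*} [Group G]

/-- Vectors all of whose coordinates are supported in `F`. -/
noncomputable def suppIn (d : ℕ) (F : Finset G) :
    Submodule ℂ (Fin d → MonoidAlgebra ℂ G) where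
  carrier := {f | ∀ i, (f i).coeff.support ⊆ F}
  zero_mem' := fun i => by simp
  add_mem' := by
    classical
    intro f g hf hg i
    exact (Finsupp.support_add (g₁ := (f i).coeff) (g₂ := (g i).coeff)).trans (Finset.union_subset (hf i) (hg i))
  smul_mem' := fun c f hf i => (Finsupp.support_smul (b := c) (g := (f i).coeff)).trans (hf i)

end Supp
section Balls

open Finset

variable {G : Type*} [Group G] {S : Finset G}

lemma one_mem_wball (S : Finset G) (k : ℕ) : (1 : G) ∈ wball S k := by
  letI := Classical.decEq G
  exact Finset.one_mem_pow (Finset.mem_insert_self 1 S)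

lemma wball_mono (S : Finset G) {j k : ℕ} (h : j ≤ k) : wball S j ⊆ wball S k := by
  letI := Classical.decEq G
  exact Finset.pow_subset_pow_right (Finset.mem_insert_self 1 S) h

lemma mem_wball_zero {a : G} : a ∈ wball S 0 ↔ a = 1 := by
  letI := Classical.decEq G
  show a ∈ (insert (1:G) S) ^ 0 ↔ a = 1
  rw [pow_zero, Finset.mem_one]

lemma mem_wball_add {j k : ℕ} {a : G} :
    a ∈ wball S (j + k) ↔ ∃ b ∈ wball S j, ∃ c ∈ wball S k, b * c = a := by
  letI := Classical.decEq G
  show a ∈ (insert (1:G) S) ^ (j + k) ↔ _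
  rw [pow_add]
  exact Finset.mem_mul

lemma S_subset_wball_one : S ⊆ wball S 1 := by
  letI := Classical.decEq G
  intro s hs
  show s ∈ (insert (1:G) S) ^ 1
  rw [pow_one]
  exact Finset.mem_insert_of_mem hs

lemma mem_wball_succ {k : ℕ} {a : G} :
    a ∈ wball S (k + 1) ↔ ∃ b ∈ wball S k, ∃ s, (s = 1 ∨ s ∈ S) ∧ b * s = a := by
  letI := Classical.decEq G
  show a ∈ (insert (1:G) S) ^ (k + 1) ↔ _
  rw [pow_succ]
  rw [Finset.mem_mul]
  simp only [Finset.mem_insert]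
  exact Iff.rfl

lemma mem_wball_succ' {k : ℕ} {a : G} :
    a ∈ wball S (k + 1) ↔ ∃ s, (s = 1 ∨ s ∈ S) ∧ ∃ b ∈ wball S k, s * b = a := by
  letI := Classical.decEq G
  show a ∈ (insert (1:G) S) ^ (k + 1) ↔ _
  rw [pow_succ']
  rw [Finset.mem_mul]
  simp only [Finset.mem_insert]
  constructor
  · rintro ⟨s, hs, b, hb, rfl⟩
    exact ⟨s, hs, b, hb, rfl⟩
  · rintro ⟨s, hs, b, hb, rfl⟩
    exact ⟨s, hs, b, hb, rfl⟩

lemma inv_mem_wball (hsym : ∀ s ∈ S, s⁻¹ ∈ S) {k : ℕ} {a : G}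
    (ha : a ∈ wball S k) : a⁻¹ ∈ wball S k := by
  induction k generalizing a with
  | zero => rw [mem_wball_zero] at ha ⊢; simp [ha]
  | succ n ih =>
      rw [mem_wball_succ] at ha
      obtain ⟨b, hb, s, hs, rfl⟩ := ha
      rw [mem_wball_succ']
      refine ⟨s⁻¹, ?_, b⁻¹, ih hb, by rw [mul_inv_rev]⟩
      rcases hs with h | h
      · left; simp [h]
      · right; exact hsym s h

lemma mem_winter {w : ℕ} {F : Finset G} {p : G} :
    p ∈ winter S w F ↔ p ∈ F ∧ ∀ q ∈ wball S w, q * p ∈ F := by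
  letI := Classical.decEq G
  show p ∈ F.filter _ ↔ _
  rw [Finset.mem_filter]
  refine and_congr_right fun _ => ⟨fun h q hq => ?_, fun h x hx => ?_⟩
  · exact h (Finset.mul_mem_mul hq (Finset.mem_singleton_self p))
  · obtain ⟨q, hq, y, hy, rfl⟩ := Finset.mem_mul.1 hx
    rw [Finset.mem_singleton] at hy
    subst hy
    exact h q hq

lemma winter_subset {w : ℕ} {F : Finset G} : winter S w F ⊆ F := by
  intro p hp; exact (mem_winter.1 hp).1

lemma mem_wbdry {F : Finset G} {p : G} :
    p ∈ wbdry S F ↔ p ∈ F ∧ ∃ s ∈ S, s * p ∉ F := by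
  letI := Classical.decEq G
  show p ∈ F.filter _ ↔ _
  rw [Finset.mem_filter]

lemma escape_lemma (hsym : ∀ s ∈ S, s⁻¹ ∈ S) (F : Finset G) :
    ∀ (k : ℕ) (q p : G), p ∈ F → q ∈ wball S k → q * p ∉ F →
      ∃ b ∈ wbdry S F, ∃ t ∈ wball S k, t * b = p := by
  intro k
  induction k with
  | zero =>
      intro q p hp hq hqp
      rw [mem_wball_zero] at hq
      subst hq
      rw [one_mul] at hqp
      exact absurd hp hqp
  | succ n ih =>
      intro q p hp hq hqp
      rw [mem_wball_succ] at hq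
      obtain ⟨q', hq', s, hs, rfl⟩ := hq
      by_cases hsp : s * p ∈ F
      · -- q' * (s * p) ∉ F, apply ih
        have h2 : q' * (s * p) ∉ F := by rwa [← mul_assoc]
        obtain ⟨b, hb, t, ht, htb⟩ := ih q' (s * p) hsp hq' h2
        refine ⟨b, hb, s⁻¹ * t, ?_, by rw [mul_assoc, htb]; group⟩
        rw [mem_wball_succ']
        refine ⟨s⁻¹, ?_, t, ht, rfl⟩
        rcases hs with h | h
        · left; simp [h]
        · right; exact hsym s h
      · rcases hs with h | h
        · subst h; rw [one_mul] at hsp; exact absurd hp hsp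
        · exact ⟨p, mem_wbdry.2 ⟨hp, s, h, hsp⟩, 1, one_mem_wball S _, one_mul p⟩

lemma sdiff_winter_card_le (hsym : ∀ s ∈ S, s⁻¹ ∈ S) (w : ℕ) (F : Finset G) :
    letI := Classical.decEq G
    (F \ winter S w F).card ≤ (wball S w).card * (wbdry S F).card := by
  letI := Classical.decEq G
  have hsub : F \ winter S w F ⊆ wball S w * wbdry S F := by
    intro p hp
    rw [Finset.mem_sdiff] at hp
    obtain ⟨hpF, hpn⟩ := hp
    have : ¬ (∀ q ∈ wball S w, q * p ∈ F) := by
      intro h; exact hpn (mem_winter.2 ⟨hpF, h⟩)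
    push_neg at this
    obtain ⟨q, hq, hqp⟩ := this
    obtain ⟨b, hb, t, ht, htb⟩ := escape_lemma hsym F w q p hpF hq hqp
    exact Finset.mem_mul.2 ⟨t, ht, b, hb, htb⟩
  exact (Finset.card_le_card hsub).trans Finset.card_mul_le

lemma exists_wball_superset (hS : IsSymmGen S) (F : Finset G) :
    ∃ k, F ⊆ wball S k := by
  classical
  have hmem : ∀ g : G, ∃ k, g ∈ wball S k := by
    intro g
    have hg : g ∈ Subgroup.closure (S : Set G) := by rw [hS.2]; trivial
    induction hg using Subgroup.closure_induction with
    | mem x hx => exact ⟨1, S_subset_wball_one hx⟩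
    | one => exact ⟨0, one_mem_wball S 0⟩
    | mul x y _ _ hx hy =>
        obtain ⟨j, hj⟩ := hx
        obtain ⟨k, hk⟩ := hy
        exact ⟨j + k, mem_wball_add.2 ⟨x, hj, y, hk, rfl⟩⟩
    | inv x _ hx =>
        obtain ⟨k, hk⟩ := hx
        exact ⟨k, inv_mem_wball hS.1 hk⟩
  induction F using Finset.induction with
  | empty => exact ⟨0, by simp⟩
  | @insert a s ha ih =>
      obtain ⟨k, hk⟩ := ih
      obtain ⟨j, hj⟩ := hmem a
      refine ⟨max j k, ?_⟩
      intro x hx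
      rcases Finset.mem_insert.1 hx with rfl | hx
      · exact wball_mono S (le_max_left j k) hj
      · exact wball_mono S (le_max_right j k) (hk hx)

end Balls
section Translate

open Finset

variable {G : Type*} [Group G] {S : Finset G}

lemma mul_singleton_eq_image {F : Finset G} {g : G} :
    letI := Classical.decEq G
    F * {g} = F.image (· * g) := by
  letI := Classical.decEq G
  ext p
  rw [Finset.mem_mul, Finset.mem_image]
  constructor
  · rintro ⟨x, hx, y, hy, rfl⟩
    rw [Finset.mem_singleton] at hy
    subst hy
    exact ⟨x, hx, rfl⟩
  · rintro ⟨x, hx, rfl⟩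
    exact ⟨x, hx, g, Finset.mem_singleton_self g, rfl⟩

lemma mem_mul_singleton {F : Finset G} {g p : G} :
    letI := Classical.decEq G
    (p ∈ F * {g} ↔ p * g⁻¹ ∈ F) := by
  letI := Classical.decEq G
  rw [mul_singleton_eq_image, Finset.mem_image]
  constructor
  · rintro ⟨x, hx, rfl⟩; simpa
  · intro h; exact ⟨p * g⁻¹, h, by group⟩

lemma card_mul_singleton (F : Finset G) (g : G) :
    letI := Classical.decEq G
    (F * {g}).card = F.card := by
  letI := Classical.decEq G
  rw [mul_singleton_eq_image]
  exact Finset.card_image_of_injective _ (mul_left_injective g)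

lemma winter_mul_singleton (w : ℕ) (F : Finset G) (g : G) :
    letI := Classical.decEq G
    winter S w (F * {g}) = winter S w F * {g} := by
  letI := Classical.decEq G
  ext p
  rw [mem_mul_singleton, mem_winter, mem_winter, mem_mul_singleton]
  constructor
  · rintro ⟨h1, h2⟩
    refine ⟨h1, fun q hq => ?_⟩
    have := h2 q hq
    rw [mem_mul_singleton] at this
    rwa [mul_assoc] at this
  · rintro ⟨h1, h2⟩
    refine ⟨h1, fun q hq => ?_⟩
    rw [mem_mul_singleton, mul_assoc]
    exact h2 q hq

lemma card_sdiff_winter_mul_singleton (w : ℕ) (F : Finset G) (g : G) :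
    letI := Classical.decEq G
    ((F * {g}) \ winter S w (F * {g})).card = (F \ winter S w F).card := by
  letI := Classical.decEq G
  rw [winter_mul_singleton, mul_singleton_eq_image, mul_singleton_eq_image,
    ← Finset.image_sdiff _ _ (mul_left_injective g)]
  exact Finset.card_image_of_injective _ (mul_left_injective g)

lemma mem_inv_mul {F Y : Finset G} {g : G} :
    letI := Classical.decEq G
    (g ∈ F⁻¹ * Y ↔ ∃ f ∈ F, ∃ p ∈ Y, f⁻¹ * p = g) := by
  letI := Classical.decEq G
  rw [Finset.mem_mul]
  constructor
  · rintro ⟨x, hx, p, hp, rfl⟩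
    obtain ⟨f, hf, rfl⟩ := Finset.mem_inv.1 hx
    exact ⟨f, hf, p, hp, rfl⟩
  · rintro ⟨f, hf, p, hp, rfl⟩
    exact ⟨f⁻¹, Finset.mem_inv.2 ⟨f, hf, rfl⟩, p, hp, rfl⟩

lemma card_inv_mul_le (F Y : Finset G) :
    letI := Classical.decEq G
    ((F⁻¹ * Y).card ≤ F.card * Y.card) := by
  letI := Classical.decEq G
  calc (F⁻¹ * Y).card ≤ F⁻¹.card * Y.card := Finset.card_mul_le
  _ = F.card * Y.card := by rw [Finset.card_inv]

end Translate
section LinAlg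

open Finset Module

variable {G : Type*} [Group G] {d : ℕ}

lemma mem_kerOn {A : Matrix (Fin d) (Fin d) (MonoidAlgebra ℂ G)} {Fs Fv : Finset G}
    {f : Fin d → MonoidAlgebra ℂ G} :
    f ∈ kerOn A Fs Fv ↔ (∀ i, (f i).coeff.support ⊆ Fs) ∧ ∀ i, ∀ g ∈ Fv, (A.mulVec f i).coeff g = 0 :=
  Iff.rfl

/-- Evaluation of coordinates on a finite set. -/
noncomputable def evalOnL (d : ℕ) (E : Finset G) :
    (Fin d → MonoidAlgebra ℂ G) →ₗ[ℂ] (Fin d × {x // x ∈ E} → ℂ) where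
  toFun f := fun ix => (f ix.1).coeff ix.2.1
  map_add' f g := by
    funext ix
    show ((f + g) ix.1).coeff ix.2.1 = (f ix.1).coeff ix.2.1 + (g ix.1).coeff ix.2.1
    rw [Pi.add_apply, MonoidAlgebra.coeff_add, Finsupp.add_apply]
  map_smul' c f := by
    funext ix
    show ((c • f) ix.1).coeff ix.2.1 = c * (f ix.1).coeff ix.2.1
    rw [Pi.smul_apply, MonoidAlgebra.coeff_smul, Finsupp.smul_apply, smul_eq_mul]

lemma suppIn_fd (d : ℕ) (F : Finset G) : FiniteDimensional ℂ (suppIn d F) := by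
  apply FiniteDimensional.of_injective ((evalOnL d F).comp (suppIn d F).subtype)
  rw [injective_iff_map_eq_zero]
  intro x hx
  ext i a
  show ((x : Fin d → MonoidAlgebra ℂ G) i).coeff a = 0
  by_cases ha : a ∈ F
  · exact congrFun hx (i, ⟨a, ha⟩)
  · by_contra h
    exact ha (x.2 i (Finsupp.mem_support_iff.2 h))

lemma kerOn_fd (A : Matrix (Fin d) (Fin d) (MonoidAlgebra ℂ G)) (Fs Fv : Finset G) :
    FiniteDimensional ℂ (kerOn A Fs Fv) := by
  haveI := suppIn_fd d Fs
  exact Submodule.finiteDimensional_of_le (S₂ := suppIn d Fs) (fun f hf => hf.1)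

lemma VSpace_fd (A : Matrix (Fin d) (Fin d) (MonoidAlgebra ℂ G)) (F : Finset G) :
    FiniteDimensional ℂ (VSpace A F) := kerOn_fd A F F

lemma mulVec_apply_eq (A : Matrix (Fin d) (Fin d) (MonoidAlgebra ℂ G))
    (f : Fin d → MonoidAlgebra ℂ G) (i : Fin d) (p : G) :
    (A.mulVec f i).coeff p = ∑ j, (A i j * f j).coeff p := by
  show (∑ j, A i j * f j).coeff p = ∑ j, (A i j * f j).coeff p
  rw [MonoidAlgebra.coeff_sum, Finsupp.finset_sum_apply]

lemma mul_apply_eq_of_agree {a x y : MonoidAlgebra ℂ G} {p : G}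
    (h : ∀ s ∈ a.coeff.support, x.coeff (s⁻¹ * p) = y.coeff (s⁻¹ * p)) :
    (a * x).coeff p = (a * y).coeff p := by
  rw [MonoidAlgebra.coeff_mul_apply_left, MonoidAlgebra.coeff_mul_apply_left]
  apply Finsupp.sum_congr
  intro s hs
  rw [h s hs]

set_option synthInstance.maxHeartbeats 1000000 in
lemma finrank_kerOn_union_le (A : Matrix (Fin d) (Fin d) (MonoidAlgebra ℂ G))
    (Fs Fv E : Finset G) :
    letI := Classical.decEq G
    finrank ℂ (kerOn A Fs Fv) ≤ finrank ℂ (kerOn A Fs (Fv ∪ E)) + d * E.card := by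
  letI := Classical.decEq G
  haveI := kerOn_fd A Fs Fv
  haveI := kerOn_fd A Fs (Fv ∪ E)
  set θ : kerOn A Fs Fv →ₗ[ℂ] (Fin d × {x // x ∈ E} → ℂ) :=
    (evalOnL d E).comp ((mulVecL A).comp (kerOn A Fs Fv).subtype) with hθ
  have h1 : finrank ℂ (kerOn A Fs Fv)
      = finrank ℂ (LinearMap.range θ) + finrank ℂ (LinearMap.ker θ) :=
    (LinearMap.finrank_range_add_finrank_ker θ).symm
  have h2 : finrank ℂ (LinearMap.range θ) ≤ d * E.card := by
    have hle := Submodule.finrank_le (LinearMap.range θ)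
    rwa [finrank_pi ℂ, Fintype.card_prod, Fintype.card_fin, Fintype.card_coe] at hle
  have hle : kerOn A Fs (Fv ∪ E) ≤ kerOn A Fs Fv :=
    fun f hf => ⟨hf.1, fun i g hg => hf.2 i g (Finset.mem_union_left _ hg)⟩
  have h3 : LinearMap.ker θ = (kerOn A Fs (Fv ∪ E)).comap (kerOn A Fs Fv).subtype := by
    ext x
    rw [LinearMap.mem_ker, Submodule.mem_comap]
    constructor
    · intro hx
      refine ⟨x.2.1, fun i g hg => ?_⟩
      rcases Finset.mem_union.1 hg with h | h
      · exact x.2.2 i g h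
      · exact congrFun hx (i, ⟨g, h⟩)
    · intro hx
      funext ix
      exact hx.2 ix.1 ix.2.1 (Finset.mem_union_right _ ix.2.2)
  have h4 : finrank ℂ (LinearMap.ker θ) = finrank ℂ (kerOn A Fs (Fv ∪ E)) := by
    rw [h3]
    exact (Submodule.comapSubtypeEquivOfLe hle).finrank_eq
  omega

end LinAlg
section RMul

open Finset Module

variable {G : Type*} [Group G] {d : ℕ}

/-- Right translation by `g` on vectors of group-algebra elements. -/
noncomputable def rmulL (d : ℕ) (g : G) :
    (Fin d → MonoidAlgebra ℂ G) →ₗ[ℂ] (Fin d → MonoidAlgebra ℂ G) where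
  toFun f := fun i => f i * MonoidAlgebra.single g 1
  map_add' f h := by funext i; show (f i + h i) * _ = _; rw [add_mul]; rfl
  map_smul' c f := by funext i; show (c • f i) * _ = _; rw [smul_mul_assoc]; rfl

lemma rmulL_apply (g : G) (f : Fin d → MonoidAlgebra ℂ G) (i : Fin d) (p : G) :
    (rmulL d g f i).coeff p = (f i).coeff (p * g⁻¹) := by
  show (f i * (MonoidAlgebra.single g 1 : MonoidAlgebra ℂ G)).coeff p = _
  rw [MonoidAlgebra.coeff_mul_single_apply, mul_one]

lemma rmulL_rmulL (g : G) (f : Fin d → MonoidAlgebra ℂ G) :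
    rmulL d g⁻¹ (rmulL d g f) = f := by
  funext i
  show (f i * MonoidAlgebra.single g 1) * MonoidAlgebra.single g⁻¹ 1 = f i
  rw [mul_assoc, MonoidAlgebra.single_mul_single, mul_inv_cancel, mul_one,
    ← MonoidAlgebra.one_def, mul_one]

lemma rmulL_rmulL' (g : G) (f : Fin d → MonoidAlgebra ℂ G) :
    rmulL d g (rmulL d g⁻¹ f) = f := by
  have := rmulL_rmulL g⁻¹ f
  rwa [inv_inv] at this

lemma mulVec_rmulL (A : Matrix (Fin d) (Fin d) (MonoidAlgebra ℂ G)) (g : G)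
    (f : Fin d → MonoidAlgebra ℂ G) (i : Fin d) :
    A.mulVec (rmulL d g f) i = A.mulVec f i * MonoidAlgebra.single g 1 := by
  show ∑ j, A i j * (f j * MonoidAlgebra.single g 1)
      = (∑ j, A i j * f j) * MonoidAlgebra.single g 1
  rw [Finset.sum_mul]
  simp only [mul_assoc]

lemma VSpace_map_rmul (A : Matrix (Fin d) (Fin d) (MonoidAlgebra ℂ G)) (F : Finset G) (g : G) :
    letI := Classical.decEq G
    (VSpace A F).map (rmulL d g) = VSpace A (F * {g}) := by
  letI := Classical.decEq G
  apply le_antisymm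
  · rintro x ⟨f, hf, rfl⟩
    constructor
    · intro i
      intro p hp
      rw [Finsupp.mem_support_iff, rmulL_apply] at hp
      rw [mem_mul_singleton]
      exact hf.1 i (Finsupp.mem_support_iff.2 hp)
    · intro i p hp
      rw [mulVec_rmulL, MonoidAlgebra.coeff_mul_single_apply, mul_one]
      exact hf.2 i (p * g⁻¹) (mem_mul_singleton.1 hp)
  · intro x hx
    refine ⟨rmulL d g⁻¹ x, ⟨?_, ?_⟩, rmulL_rmulL' g x⟩
    · intro i p hp
      rw [Finsupp.mem_support_iff, rmulL_apply, inv_inv] at hp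
      have : p * g ∈ F * {g} := hx.1 i (Finsupp.mem_support_iff.2 hp)
      rw [mem_mul_singleton, mul_inv_cancel_right] at this
      exact this
    · intro i p hp
      rw [mulVec_rmulL, MonoidAlgebra.coeff_mul_single_apply, mul_one, inv_inv]
      refine hx.2 i (p * g) (mem_mul_singleton.2 ?_)
      rwa [mul_inv_cancel_right]

/-- Right translation as a linear equivalence. -/
noncomputable def rmulE (d : ℕ) (g : G) :
    (Fin d → MonoidAlgebra ℂ G) ≃ₗ[ℂ] (Fin d → MonoidAlgebra ℂ G) :=
  LinearEquiv.ofLinear (rmulL d g) (rmulL d g⁻¹)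
    (LinearMap.ext fun f => rmulL_rmulL' g f)
    (LinearMap.ext fun f => rmulL_rmulL g f)

lemma finrank_VSpace_translate (A : Matrix (Fin d) (Fin d) (MonoidAlgebra ℂ G))
    (F : Finset G) (g : G) :
    letI := Classical.decEq G
    finrank ℂ (VSpace A (F * {g})) = finrank ℂ (VSpace A F) := by
  letI := Classical.decEq G
  have h1 : (VSpace A F).map (rmulE d g : (Fin d → MonoidAlgebra ℂ G) →ₗ[ℂ] _)
      = VSpace A (F * {g}) := VSpace_map_rmul A F g
  rw [← h1]
  exact (LinearEquiv.finrank_eq ((rmulE d g).submoduleMap (VSpace A F))).symm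

end RMul

section Restrict

open Finset Module

variable {G : Type*} [Group G] {d : ℕ}

lemma restrictTo_apply (F : Finset G) (f : Fin d → MonoidAlgebra ℂ G) (i : Fin d) (a : G) :
    letI := Classical.decEq G
    (restrictTo d F f i).coeff a = if a ∈ F then (f i).coeff a else 0 := rfl

lemma restrictTo_eq_self {F : Finset G} {f : Fin d → MonoidAlgebra ℂ G}
    (h : ∀ i, (f i).coeff.support ⊆ F) : restrictTo d F f = f := by
  letI := Classical.decEq G
  funext i
  ext a
  rw [restrictTo_apply]
  split_ifs with ha
  · rfl
  · by_contra hc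
    exact ha (h i (Finsupp.mem_support_iff.2 fun h0 => hc h0.symm))

lemma restrictTo_restrictTo (T T' : Finset G) (f : Fin d → MonoidAlgebra ℂ G) :
    letI := Classical.decEq G
    restrictTo d T (restrictTo d T' f) = restrictTo d (T ∩ T') f := by
  letI := Classical.decEq G
  funext i
  ext a
  rw [restrictTo_apply, restrictTo_apply, restrictTo_apply]
  by_cases h1 : a ∈ T <;> by_cases h2 : a ∈ T' <;> simp [h1, h2, Finset.mem_inter]

lemma restrictTo_support (F : Finset G) (f : Fin d → MonoidAlgebra ℂ G) (i : Fin d) :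
    ((restrictTo d F f) i).coeff.support ⊆ F := by
  letI := Classical.decEq G
  intro a ha
  rw [Finsupp.mem_support_iff, restrictTo_apply] at ha
  by_contra h
  rw [if_neg h] at ha
  exact ha rfl

lemma restrictTo_eq_zero_iff {F : Finset G} {f : Fin d → MonoidAlgebra ℂ G} :
    restrictTo d F f = 0 ↔ ∀ i, ∀ a ∈ F, (f i).coeff a = 0 := by
  letI := Classical.decEq G
  constructor
  · intro h i a ha
    have := congrFun h i
    have h2 := congrArg (fun x => x.coeff a) this
    simp only [Pi.zero_apply, MonoidAlgebra.coeff_zero, Finsupp.coe_zero] at h2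
    rwa [restrictTo_apply, if_pos ha] at h2
  · intro h
    funext i
    ext a
    rw [restrictTo_apply]
    split_ifs with ha
    · exact h i a ha
    · rfl

lemma restrictTo_empty (f : Fin d → MonoidAlgebra ℂ G) : restrictTo d (∅ : Finset G) f = 0 :=
  restrictTo_eq_zero_iff.2 fun _ a ha => absurd ha (Finset.notMem_empty a)

end Restrict
section Shearer

open Finset

/-- Shearer-type inequality for monotone submodular functions. -/
lemma shearer_ineq {α ι : Type*} [DecidableEq α] [DecidableEq ι] (r : Finset α → ℕ)
    (hr0 : r ∅ = 0)
    (hmono : ∀ {A B : Finset α}, A ⊆ B → r A ≤ r B)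
    (hsub : ∀ A B : Finset α, r (A ∪ B) + r (A ∩ B) ≤ r A + r B) :
    ∀ (Y : Finset α) (I : Finset ι) (T : ι → Finset α) (M : ℕ),
      (∀ i ∈ I, T i ⊆ Y) → (∀ p ∈ Y, M ≤ (I.filter fun i => p ∈ T i).card) →
      M * r Y ≤ ∑ i ∈ I, r (T i) := by
  intro Y
  induction Y using Finset.induction with
  | empty =>
      intro I T M hT _
      have : ∀ i ∈ I, r (T i) = 0 := fun i hi => by
        rw [Finset.subset_empty.1 (hT i hi), hr0]
      rw [hr0]
      simp
  | @insert p Y' hp ih =>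
      intro I T M hT hcov
      classical
      set k := (I.filter fun i => p ∈ T i).card with hk
      have hkM : M ≤ k := hcov p (Finset.mem_insert_self p Y')
      -- apply IH to the erased family
      have hIH : M * r Y' ≤ ∑ i ∈ I, r ((T i).erase p) := by
        apply ih I (fun i => (T i).erase p) M
        · intro i hi
          intro x hx
          rw [Finset.mem_erase] at hx
          rcases Finset.mem_insert.1 (hT i hi hx.2) with h | h
          · exact absurd h hx.1
          · exact h
        · intro q hq
          have hqY : q ∈ insert p Y' := Finset.mem_insert_of_mem hq
          refine le_trans (hcov q hqY) (Finset.card_le_card ?_)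
          intro i hi
          rw [Finset.mem_filter] at hi ⊢
          exact ⟨hi.1, Finset.mem_erase.2 ⟨fun h => hp (h ▸ hq), hi.2⟩⟩
      -- pointwise inequality
      have hpt : ∀ i ∈ I,
          r ((T i).erase p) + (if p ∈ T i then r (insert p Y') else r Y')
            ≤ r (T i) + r Y' := by
        intro i hi
        split_ifs with hpi
        · have hU : T i ∪ Y' = insert p Y' := by
            apply Finset.Subset.antisymm
            · exact Finset.union_subset (hT i hi) (Finset.subset_insert p Y')
            · intro x hx
              rcases Finset.mem_insert.1 hx with rfl | hx
              · exact Finset.mem_union_left _ hpi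
              · exact Finset.mem_union_right _ hx
          have hI2 : T i ∩ Y' = (T i).erase p := by
            apply Finset.Subset.antisymm
            · intro x hx
              rw [Finset.mem_inter] at hx
              exact Finset.mem_erase.2 ⟨fun h => hp (h ▸ hx.2), hx.1⟩
            · intro x hx
              rw [Finset.mem_erase] at hx
              rcases Finset.mem_insert.1 (hT i hi hx.2) with h | h
              · exact absurd h hx.1
              · exact Finset.mem_inter.2 ⟨hx.2, h⟩
          have := hsub (T i) Y'
          rw [hU, hI2] at this
          omega
        · have : (T i).erase p = T i := Finset.erase_eq_of_notMem hpi
          rw [this]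
      -- sum it up
      have hsum : ∑ i ∈ I, (r ((T i).erase p) + (if p ∈ T i then r (insert p Y') else r Y'))
          ≤ ∑ i ∈ I, (r (T i) + r Y') := Finset.sum_le_sum hpt
      obtain ⟨m, hm⟩ : ∃ m, I.card = k + m := ⟨I.card - k, by
        have := Finset.card_filter_le I (fun i => p ∈ T i)
        omega⟩
      have hite : ∑ i ∈ I, (if p ∈ T i then r (insert p Y') else r Y')
          = k * r (insert p Y') + m * r Y' := by
        rw [Finset.sum_ite, Finset.sum_const, Finset.sum_const, smul_eq_mul, smul_eq_mul]
        have hnf : (I.filter fun i => ¬ p ∈ T i).card = m := by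
          have := Finset.card_filter_add_card_filter_not
            (s := I) (p := fun i => p ∈ T i)
          simp only [hm] at this ⊢
          omega
        rw [hnf]
      rw [Finset.sum_add_distrib, Finset.sum_add_distrib, Finset.sum_const, smul_eq_mul,
        hite, hm] at hsum
      have hyx : r Y' ≤ r (insert p Y') := hmono (Finset.subset_insert p Y')
      have h1 : (M : ℤ) * r Y' ≤ ∑ i ∈ I, (r ((T i).erase p) : ℤ) := by exact_mod_cast hIH
      have h2 : (∑ i ∈ I, (r ((T i).erase p) : ℤ))
          + ((k : ℤ) * r (insert p Y') + (m : ℤ) * r Y')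
          ≤ (∑ i ∈ I, (r (T i) : ℤ)) + ((k : ℤ) + m) * r Y' := by exact_mod_cast hsum
      have key : (0 : ℤ) ≤ ((k : ℤ) - M) * ((r (insert p Y') : ℤ) - r Y') := by
        apply mul_nonneg
        · have : (M : ℤ) ≤ k := by exact_mod_cast hkM
          omega
        · have : (r Y' : ℤ) ≤ r (insert p Y') := by exact_mod_cast hyx
          omega
      have goal' : (M : ℤ) * r (insert p Y') ≤ ∑ i ∈ I, (r (T i) : ℤ) := by nlinarith [key, h1, h2]
      exact_mod_cast goal'

end Shearer
section Rank

open Finset Module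

variable {G : Type*} [Group G] {d : ℕ} {S : Finset G}

/-- Restriction map from `V(Y)`. -/
noncomputable def rhoT (A : Matrix (Fin d) (Fin d) (MonoidAlgebra ℂ G)) (Y T : Finset G) :
    VSpace A Y →ₗ[ℂ] (Fin d → MonoidAlgebra ℂ G) :=
  (restrictTo d T).comp (VSpace A Y).subtype

/-- The rank of the restriction of `V(Y)` to coordinates in `T`. -/
noncomputable def rkT (A : Matrix (Fin d) (Fin d) (MonoidAlgebra ℂ G)) (Y T : Finset G) : ℕ :=
  finrank ℂ (LinearMap.range (rhoT A Y T))

lemma rhoT_apply (A : Matrix (Fin d) (Fin d) (MonoidAlgebra ℂ G)) (Y T : Finset G)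
    (x : VSpace A Y) : rhoT A Y T x = restrictTo d T (x : Fin d → MonoidAlgebra ℂ G) := rfl

lemma rkT_empty (A : Matrix (Fin d) (Fin d) (MonoidAlgebra ℂ G)) (Y : Finset G) :
    rkT A Y ∅ = 0 := by
  have h : rhoT A Y ∅ = 0 := by
    apply LinearMap.ext
    intro x
    rw [rhoT_apply]
    exact restrictTo_empty _
  rw [rkT, h, LinearMap.range_zero, finrank_bot]

lemma rkT_mono (A : Matrix (Fin d) (Fin d) (MonoidAlgebra ℂ G)) (Y : Finset G)
    {T T' : Finset G} (h : T ⊆ T') : rkT A Y T ≤ rkT A Y T' := by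
  letI := Classical.decEq G
  haveI := VSpace_fd A Y
  have hcomp : rhoT A Y T = (restrictTo d T).comp (rhoT A Y T') := by
    apply LinearMap.ext
    intro x
    show restrictTo d T (x : Fin d → MonoidAlgebra ℂ G)
        = restrictTo d T (restrictTo d T' (x : Fin d → MonoidAlgebra ℂ G))
    rw [restrictTo_restrictTo, Finset.inter_eq_left.2 h]
  rw [rkT, rkT, hcomp, LinearMap.range_comp]
  exact Submodule.finrank_map_le _ _

lemma ker_rhoT_antitone (A : Matrix (Fin d) (Fin d) (MonoidAlgebra ℂ G)) (Y : Finset G)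
    {T T' : Finset G} (h : T ⊆ T') :
    LinearMap.ker (rhoT A Y T') ≤ LinearMap.ker (rhoT A Y T) := by
  intro x hx
  rw [LinearMap.mem_ker, rhoT_apply] at hx ⊢
  rw [restrictTo_eq_zero_iff] at hx ⊢
  exact fun i a ha => hx i a (h ha)

lemma rkT_rank_nullity (A : Matrix (Fin d) (Fin d) (MonoidAlgebra ℂ G)) (Y T : Finset G) :
    rkT A Y T + finrank ℂ (LinearMap.ker (rhoT A Y T)) = finrank ℂ (VSpace A Y) := by
  haveI := VSpace_fd A Y
  exact LinearMap.finrank_range_add_finrank_ker (rhoT A Y T)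

lemma rkT_submodular (A : Matrix (Fin d) (Fin d) (MonoidAlgebra ℂ G)) (Y : Finset G)
    (T T' : Finset G) :
    letI := Classical.decEq G
    rkT A Y (T ∪ T') + rkT A Y (T ∩ T') ≤ rkT A Y T + rkT A Y T' := by
  letI := Classical.decEq G
  haveI := VSpace_fd A Y
  have hU : LinearMap.ker (rhoT A Y (T ∪ T'))
      = LinearMap.ker (rhoT A Y T) ⊓ LinearMap.ker (rhoT A Y T') := by
    apply le_antisymm
    · exact le_inf (ker_rhoT_antitone A Y Finset.subset_union_left)
        (ker_rhoT_antitone A Y Finset.subset_union_right)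
    · intro x hx
      rw [Submodule.mem_inf] at hx
      obtain ⟨h1, h2⟩ := hx
      rw [LinearMap.mem_ker, rhoT_apply] at h1 h2 ⊢
      rw [restrictTo_eq_zero_iff] at h1 h2 ⊢
      intro i a ha
      rcases Finset.mem_union.1 ha with h | h
      · exact h1 i a h
      · exact h2 i a h
  have hI : LinearMap.ker (rhoT A Y T) ⊔ LinearMap.ker (rhoT A Y T')
      ≤ LinearMap.ker (rhoT A Y (T ∩ T')) :=
    sup_le (ker_rhoT_antitone A Y Finset.inter_subset_left)
      (ker_rhoT_antitone A Y Finset.inter_subset_right)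
  have h1 := rkT_rank_nullity A Y T
  have h2 := rkT_rank_nullity A Y T'
  have h3 := rkT_rank_nullity A Y (T ∪ T')
  have h4 := rkT_rank_nullity A Y (T ∩ T')
  have h5 := Submodule.finrank_sup_add_finrank_inf_eq
    (LinearMap.ker (rhoT A Y T)) (LinearMap.ker (rhoT A Y T'))
  have h6 : finrank ℂ ↥(LinearMap.ker (rhoT A Y T) ⊔ LinearMap.ker (rhoT A Y T'))
      ≤ finrank ℂ (LinearMap.ker (rhoT A Y (T ∩ T'))) := Submodule.finrank_mono hI
  rw [← hU] at h5
  omega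

lemma rkT_full (A : Matrix (Fin d) (Fin d) (MonoidAlgebra ℂ G)) (Y : Finset G) :
    rkT A Y Y = finrank ℂ (VSpace A Y) := by
  haveI := VSpace_fd A Y
  have hker : LinearMap.ker (rhoT A Y Y) = ⊥ := by
    rw [LinearMap.ker_eq_bot']
    intro x hx
    rw [rhoT_apply, restrictTo_eq_self x.2.1] at hx
    exact Subtype.ext hx
  have := rkT_rank_nullity A Y Y
  rw [hker, finrank_bot, add_zero] at this
  exact this

lemma rkT_le_translate (hsym : ∀ s ∈ S, s⁻¹ ∈ S) {w : ℕ}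
    (A : Matrix (Fin d) (Fin d) (MonoidAlgebra ℂ G))
    (hA : ∀ i j, (A i j).coeff.support ⊆ wball S w) (Y F : Finset G) (g : G) :
    letI := Classical.decEq G
    rkT A Y ((F * {g}) ∩ Y) ≤ finrank ℂ (VSpace A F)
      + d * ((F \ winter S w F).card + ((F * {g}) \ Y).card) := by
  letI := Classical.decEq G
  haveI := VSpace_fd A Y
  set Fg := F * {g} with hFg
  set Dg := Y.filter (fun p => ∀ q ∈ wball S w, q * p ∈ Fg) with hDg
  -- step 1 : the range lands in kerOn A Fg Dg
  have hrange : LinearMap.range (rhoT A Y (Fg ∩ Y)) ≤ kerOn A Fg Dg := by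
    rintro x ⟨f, rfl⟩
    rw [rhoT_apply]
    constructor
    · intro i
      exact (restrictTo_support _ _ _).trans Finset.inter_subset_left
    · intro i p hp
      rw [hDg, Finset.mem_filter] at hp
      obtain ⟨hpY, hq⟩ := hp
      have hagree : ∀ j : Fin d,
          (A.mulVec (restrictTo d (Fg ∩ Y) (f : Fin d → MonoidAlgebra ℂ G)) j).coeff p
            = (A.mulVec (f : Fin d → MonoidAlgebra ℂ G) j).coeff p := by
        intro j
        rw [mulVec_apply_eq, mulVec_apply_eq]
        apply Finset.sum_congr rfl
        intro j' _
        apply mul_apply_eq_of_agree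
        intro s hs
        have hsB : s ∈ wball S w := hA j j' hs
        have hsiB : s⁻¹ ∈ wball S w := inv_mem_wball hsym hsB
        have hmem : s⁻¹ * p ∈ Fg := hq s⁻¹ hsiB
        rw [restrictTo_apply]
        by_cases hY : s⁻¹ * p ∈ Y
        · rw [if_pos (Finset.mem_inter.2 ⟨hmem, hY⟩)]
        · rw [if_neg (fun hc => hY (Finset.mem_inter.1 hc).2)]
          have : ((f : Fin d → MonoidAlgebra ℂ G) j').coeff (s⁻¹ * p) = 0 := by
            by_contra hc
            exact hY (f.2.1 j' (Finsupp.mem_support_iff.2 hc))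
          rw [this]
      rw [hagree i]
      exact f.2.2 i p hpY
  -- step 2 :
  haveI := kerOn_fd A Fg Dg
  have h2 : rkT A Y (Fg ∩ Y) ≤ finrank ℂ (kerOn A Fg Dg) := Submodule.finrank_mono hrange
  -- step 3 :
  have hDgFg : Dg ⊆ Fg := by
    intro p hp
    rw [hDg, Finset.mem_filter] at hp
    have := hp.2 1 (one_mem_wball S w)
    rwa [one_mul] at this
  have h3 : finrank ℂ (kerOn A Fg Dg)
      ≤ finrank ℂ (kerOn A Fg (Dg ∪ (Fg \ Dg))) + d * (Fg \ Dg).card :=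
    finrank_kerOn_union_le A Fg Dg (Fg \ Dg)
  have hUnion : Dg ∪ (Fg \ Dg) = Fg := Finset.union_sdiff_of_subset hDgFg
  rw [hUnion] at h3
  have h4 : finrank ℂ (kerOn A Fg Fg) = finrank ℂ (VSpace A F) := by
    rw [hFg]
    exact finrank_VSpace_translate A F g
  -- step 5 : card bound
  have h5 : (Fg \ Dg).card ≤ (F \ winter S w F).card + (Fg \ Y).card := by
    have hsub : Fg \ Dg ⊆ (Fg \ winter S w Fg) ∪ (Fg \ Y) := by
      intro p hp
      rw [Finset.mem_sdiff] at hp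
      obtain ⟨hpFg, hpD⟩ := hp
      rw [Finset.mem_union]
      by_cases hpY : p ∈ Y
      · left
        rw [Finset.mem_sdiff]
        refine ⟨hpFg, fun hw => ?_⟩
        apply hpD
        rw [hDg, Finset.mem_filter]
        exact ⟨hpY, (mem_winter.1 hw).2⟩
      · right
        exact Finset.mem_sdiff.2 ⟨hpFg, hpY⟩
    calc (Fg \ Dg).card ≤ ((Fg \ winter S w Fg) ∪ (Fg \ Y)).card := Finset.card_le_card hsub
      _ ≤ (Fg \ winter S w Fg).card + (Fg \ Y).card := Finset.card_union_le _ _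
      _ = (F \ winter S w F).card + (Fg \ Y).card := by
          rw [hFg, card_sdiff_winter_mul_singleton]
  have h6 : d * (Fg \ Dg).card ≤ d * ((F \ winter S w F).card + (Fg \ Y).card) :=
    Nat.mul_le_mul_left d h5
  omega

end Rank
section MainCount

open Finset Module

variable {G : Type*} [Group G] {d : ℕ} {S : Finset G}

lemma main_count (hsym : ∀ s ∈ S, s⁻¹ ∈ S) {w : ℕ}
    (A : Matrix (Fin d) (Fin d) (MonoidAlgebra ℂ G))
    (hA : ∀ i j, (A i j).coeff.support ⊆ wball S w)
    (F₀ : Finset G) {k : ℕ} (hk : F₀ ⊆ wball S k) (Y : Finset G) :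
    letI := Classical.decEq G
    F₀.card * finrank ℂ (VSpace A Y)
      ≤ (Y.card + F₀.card * (Y \ winter S (2 * k) Y).card)
          * (finrank ℂ (VSpace A F₀) + d * (F₀ \ winter S w F₀).card)
        + d * (F₀.card * (F₀.card * (Y \ winter S (2 * k) Y).card)) := by
  letI := Classical.decEq G
  set L := 2 * k with hL
  set Ω := winter S L Y with hΩ
  set I := F₀⁻¹ * Y with hI
  set T : G → Finset G := fun g => (F₀ * {g}) ∩ Y with hT
  set v := finrank ℂ (VSpace A F₀) with hv
  set e := (F₀ \ winter S w F₀).card with he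
  set t := (Y \ Ω).card with ht
  -- Shearer
  have hshear : F₀.card * rkT A Y Y ≤ ∑ g ∈ I, rkT A Y (T g) := by
    apply shearer_ineq (rkT A Y) (rkT_empty A Y) (fun h => rkT_mono A Y h)
      (rkT_submodular A Y) Y I T F₀.card
    · intro g _
      exact Finset.inter_subset_right
    · intro p hp
      have hsub : F₀.image (fun f => f⁻¹ * p) ⊆ I.filter (fun g => p ∈ T g) := by
        intro g hg
        obtain ⟨f, hf, rfl⟩ := Finset.mem_image.1 hg
        rw [Finset.mem_filter]
        refine ⟨mem_inv_mul.2 ⟨f, hf, p, hp, rfl⟩, ?_⟩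
        rw [hT]
        refine Finset.mem_inter.2 ⟨?_, hp⟩
        rw [mem_mul_singleton]
        have : p * (f⁻¹ * p)⁻¹ = f := by group
        rwa [this]
      have hcard : (F₀.image (fun f => f⁻¹ * p)).card = F₀.card := by
        apply Finset.card_image_of_injective
        intro a b hab
        have h2 : a⁻¹ = b⁻¹ := mul_left_injective p hab
        exact inv_injective h2
      calc F₀.card = (F₀.image (fun f => f⁻¹ * p)).card := hcard.symm
        _ ≤ (I.filter (fun g => p ∈ T g)).card := Finset.card_le_card hsub
  -- pointwise bound
  have hbound : ∀ g ∈ I, rkT A Y (T g) ≤ v + d * e + d * ((F₀ * {g}) \ Y).card := by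
    intro g _
    have h0 := rkT_le_translate hsym A hA Y F₀ g
    calc rkT A Y (T g) ≤ v + d * (e + ((F₀ * {g}) \ Y).card) := h0
      _ = v + d * e + d * ((F₀ * {g}) \ Y).card := by ring
  -- the residual sum
  have hgood : ∀ g ∈ I, g ∉ F₀⁻¹ * (Y \ Ω) → F₀ * {g} ⊆ Y := by
    intro g hg hng
    obtain ⟨f, hf, p, hp, rfl⟩ := mem_inv_mul.1 hg
    have hpΩ : p ∈ Ω := by
      by_contra hc
      exact hng (mem_inv_mul.2 ⟨f, hf, p, Finset.mem_sdiff.2 ⟨hp, hc⟩, rfl⟩)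
    intro x hx
    rw [mem_mul_singleton] at hx
    -- x * (f⁻¹ * p)⁻¹ ∈ F₀, so x = f'' * f⁻¹ * p with f'' ∈ F₀
    set f'' := x * (f⁻¹ * p)⁻¹ with hf''
    have hxe : x = (f'' * f⁻¹) * p := by rw [hf'']; group
    have hq : f'' * f⁻¹ ∈ wball S (k + k) :=
      mem_wball_add.2 ⟨f'', hk hx, f⁻¹, inv_mem_wball hsym (hk hf), rfl⟩
    have hq2 : f'' * f⁻¹ ∈ wball S L := by
      rw [hL]
      have : k + k = 2 * k := by ring
      rwa [this] at hq
    rw [hxe]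
    exact (mem_winter.1 hpΩ).2 (f'' * f⁻¹) hq2
  have hres : ∑ g ∈ I, ((F₀ * {g}) \ Y).card ≤ F₀.card * (F₀.card * t) := by
    have h1 : ∀ g ∈ I, ((F₀ * {g}) \ Y).card
        ≤ if g ∈ F₀⁻¹ * (Y \ Ω) then F₀.card else 0 := by
      intro g hg
      split_ifs with hc
      · calc ((F₀ * {g}) \ Y).card ≤ (F₀ * {g}).card :=
            Finset.card_le_card (Finset.sdiff_subset)
          _ = F₀.card := _root_.card_mul_singleton F₀ g
      · have := hgood g hg hc
        have hempty : (F₀ * {g}) \ Y = ∅ := Finset.sdiff_eq_empty_iff_subset.2 this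
        rw [hempty]
        simp
    calc ∑ g ∈ I, ((F₀ * {g}) \ Y).card
        ≤ ∑ g ∈ I, (if g ∈ F₀⁻¹ * (Y \ Ω) then F₀.card else 0) := Finset.sum_le_sum h1
      _ ≤ ∑ g ∈ F₀⁻¹ * (Y \ Ω), F₀.card := by
          rw [Finset.sum_ite_mem]
          apply Finset.sum_le_sum_of_subset
          exact Finset.inter_subset_right
      _ = (F₀⁻¹ * (Y \ Ω)).card * F₀.card := by rw [Finset.sum_const, smul_eq_mul]
      _ ≤ (F₀.card * t) * F₀.card := by
          apply Nat.mul_le_mul_right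
          rw [ht]
          exact card_inv_mul_le F₀ (Y \ Ω)
      _ = F₀.card * (F₀.card * t) := by ring
  -- size of I
  have hIle : I.card ≤ Y.card + F₀.card * t := by
    have hsub : I ⊆ Y ∪ (F₀⁻¹ * (Y \ Ω)) := by
      intro g hg
      rw [Finset.mem_union]
      obtain ⟨f, hf, p, hp, rfl⟩ := mem_inv_mul.1 hg
      by_cases hpΩ : p ∈ Ω
      · left
        have hq : f⁻¹ ∈ wball S L := wball_mono S (by omega) (inv_mem_wball hsym (hk hf))
        exact (mem_winter.1 hpΩ).2 f⁻¹ hq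
      · right
        exact mem_inv_mul.2 ⟨f, hf, p, Finset.mem_sdiff.2 ⟨hp, hpΩ⟩, rfl⟩
    calc I.card ≤ (Y ∪ (F₀⁻¹ * (Y \ Ω))).card := Finset.card_le_card hsub
      _ ≤ Y.card + (F₀⁻¹ * (Y \ Ω)).card := Finset.card_union_le _ _
      _ ≤ Y.card + F₀.card * t := by
          apply Nat.add_le_add_left
          rw [ht]
          exact card_inv_mul_le F₀ (Y \ Ω)
  -- combine
  have hsum2 : ∑ g ∈ I, rkT A Y (T g)
      ≤ I.card * (v + d * e) + d * (F₀.card * (F₀.card * t)) := by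
    calc ∑ g ∈ I, rkT A Y (T g)
        ≤ ∑ g ∈ I, (v + d * e + d * ((F₀ * {g}) \ Y).card) := Finset.sum_le_sum hbound
      _ = I.card * (v + d * e) + d * ∑ g ∈ I, ((F₀ * {g}) \ Y).card := by
          rw [Finset.sum_add_distrib, Finset.sum_const, smul_eq_mul, Finset.mul_sum]
      _ ≤ I.card * (v + d * e) + d * (F₀.card * (F₀.card * t)) := by
          exact Nat.add_le_add_left (Nat.mul_le_mul_left d hres) _
  have hfull : rkT A Y Y = finrank ℂ (VSpace A Y) := rkT_full A Y
  calc F₀.card * finrank ℂ (VSpace A Y) = F₀.card * rkT A Y Y := by rw [hfull]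
    _ ≤ ∑ g ∈ I, rkT A Y (T g) := hshear
    _ ≤ I.card * (v + d * e) + d * (F₀.card * (F₀.card * t)) := hsum2
    _ ≤ (Y.card + F₀.card * t) * (v + d * e) + d * (F₀.card * (F₀.card * t)) := by
        exact Nat.add_le_add_right (Nat.mul_le_mul_right _ hIle) _
end MainCount
section Arith

lemma real_arith (Fc Yc nY vR eR t c δ ε dd δ' : ℝ)
    (hFc0 : 0 < Fc) (hYc0 : 0 < Yc) (hdd : 0 ≤ dd) (ht0 : 0 ≤ t)
    (hcδ : 0 ≤ c + δ)
    (master : Fc * nY ≤ (Yc + Fc * t) * (vR + dd * eR) + dd * (Fc * (Fc * t)))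
    (h3 : vR + dd * eR ≤ (c + δ) * Fc)
    (h4 : t ≤ δ' * Yc)
    (hδ'0 : 0 ≤ δ')
    (hδ'2 : δ' ≤ ε / (Fc * (c + δ + dd) + 1))
    (hε0 : 0 < ε) :
    nY / Yc ≤ c + δ + ε := by
  set X : ℝ := Fc * (c + δ + dd) with hX
  have hX0 : 0 ≤ X := by
    apply mul_nonneg hFc0.le
    linarith
  have hpos : (0 : ℝ) ≤ Yc + Fc * t := by positivity
  have stepA : Fc * nY ≤ (Yc + Fc * t) * ((c + δ) * Fc) + dd * (Fc * (Fc * t)) := by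
    have := mul_le_mul_of_nonneg_left h3 hpos
    linarith
  have stepB : nY ≤ (Yc + Fc * t) * (c + δ) + dd * Fc * t := by
    rw [← mul_le_mul_iff_of_pos_right hFc0]
    calc nY * Fc = Fc * nY := by ring
      _ ≤ (Yc + Fc * t) * ((c + δ) * Fc) + dd * (Fc * (Fc * t)) := stepA
      _ = ((Yc + Fc * t) * (c + δ) + dd * Fc * t) * Fc := by ring
  have hm1 : (Fc * (c + δ)) * t ≤ (Fc * (c + δ)) * (δ' * Yc) :=
    mul_le_mul_of_nonneg_left h4 (mul_nonneg hFc0.le hcδ)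
  have hm2 : (dd * Fc) * t ≤ (dd * Fc) * (δ' * Yc) :=
    mul_le_mul_of_nonneg_left h4 (mul_nonneg hdd hFc0.le)
  have stepC : nY ≤ (Yc + Fc * (δ' * Yc)) * (c + δ) + dd * Fc * (δ' * Yc) := by
    nlinarith [stepB, hm1, hm2]
  have hX1 : (0 : ℝ) < X + 1 := by linarith
  have hXE : X * (ε / (X + 1)) ≤ ε := by
    rw [mul_comm, div_mul_eq_mul_div, div_le_iff₀ hX1]
    nlinarith [hε0.le, hX0]
  have stepE : Fc * δ' * (c + δ + dd) ≤ ε := by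
    calc Fc * δ' * (c + δ + dd) = X * δ' := by rw [hX]; ring
      _ ≤ X * (ε / (X + 1)) := mul_le_mul_of_nonneg_left hδ'2 hX0
      _ ≤ ε := hXE
  have hm3 : Yc * (Fc * δ' * (c + δ + dd)) ≤ Yc * ε :=
    mul_le_mul_of_nonneg_left stepE hYc0.le
  have stepF : nY ≤ Yc * (c + δ + ε) := by nlinarith [stepC, hm3]
  rw [div_le_iff₀ hYc0]
  linarith [stepF]

end Arith
set_option maxHeartbeats 2000000 in
theorem dim_upper_bound {G : Type*} [Group G] (S : Finset G) (hS : IsSymmGen S)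
    (d w : ℕ) (A : Matrix (Fin d) (Fin d) (MonoidAlgebra ℂ G))
    (hA : ∀ i j, (A i j).coeff.support ⊆ wball S w)
    (F : ℕ → Finset G) (hF : IsFolnerExhaustion S F) (c : ℝ)
    (hc : Tendsto (fun n => (Module.finrank ℂ (VSpace A (F n)) : ℝ) / ((F n).card : ℝ))
      atTop (𝓝 c))
    (δ ε : ℝ) (hδ : 0 < δ) (hε0 : 0 < ε) (hε1 : ε < 1) :
    ∃ (L : ℕ) (δ' : ℝ), 0 < δ' ∧ ∀ Y : Finset G, Y.Nonempty →
      ((1 - δ') * (Y.card : ℝ) < ((winter S L Y).card : ℝ)) →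
      (Module.finrank ℂ (VSpace A Y) : ℝ) / (Y.card : ℝ) ≤ (1 - ε)⁻¹ * (c + δ) + ε := by
  letI := Classical.decEq G
  obtain ⟨h1F, hmono, hexh, hfol⟩ := hF
  have hsym := hS.1
  -- c is nonnegative
  have hc0 : (0 : ℝ) ≤ c :=
    ge_of_tendsto hc (Filter.Eventually.of_forall fun n => by positivity)
  have hcδ : (0 : ℝ) ≤ c + δ := by linarith
  -- the boundary-ratio target
  set Wr : ℝ := ((wball S w).card : ℝ) with hWr
  have hWr0 : (0 : ℝ) ≤ Wr := by positivity
  set β : ℝ := δ / (2 * ((d : ℝ) + 1) * (Wr + 1)) with hβ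
  have hβpos : 0 < β := by
    apply div_pos hδ
    positivity
  -- choose a good Folner set
  have ev1 : ∀ᶠ n in atTop,
      (Module.finrank ℂ (VSpace A (F n)) : ℝ) / ((F n).card : ℝ) < c + δ / 2 :=
    hc.eventually (gt_mem_nhds (by linarith))
  have ev2 : ∀ᶠ n in atTop,
      ((wbdry S (F n)).card : ℝ) / ((F n).card : ℝ) < β :=
    hfol.eventually (gt_mem_nhds hβpos)
  obtain ⟨N, hN1, hN2⟩ := (ev1.and ev2).exists
  set F₀ := F N with hF₀
  have hF₀ne : (1 : G) ∈ F₀ := hmono (Nat.zero_le N) h1F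
  have hFc0 : (0 : ℝ) < (F₀.card : ℝ) := by
    have : 0 < F₀.card := Finset.card_pos.2 ⟨1, hF₀ne⟩
    exact_mod_cast this
  set Fc : ℝ := (F₀.card : ℝ) with hFc
  obtain ⟨k, hk⟩ := exists_wball_superset hS F₀
  -- numeric abbreviations
  set vR : ℝ := (Module.finrank ℂ (VSpace A F₀) : ℝ) with hvR
  set eR : ℝ := ((F₀ \ winter S w F₀).card : ℝ) with heR
  set Br : ℝ := ((wbdry S F₀).card : ℝ) with hBr
  -- bound on vR
  have hv1 : vR ≤ (c + δ / 2) * Fc := le_of_lt ((div_lt_iff₀ hFc0).1 hN1)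
  -- bound on d * eR
  have hBr1 : Br < β * Fc := (div_lt_iff₀ hFc0).1 hN2
  have heW : eR ≤ Wr * Br := by
    rw [heR, hWr, hBr]
    exact_mod_cast sdiff_winter_card_le hsym w F₀
  have he1 : (d : ℝ) * eR ≤ (δ / 2) * Fc := by
    have hβe : ((d : ℝ) + 1) * (Wr + 1) * β = δ / 2 := by
      rw [hβ]
      field_simp
    have h2 : (d : ℝ) * eR ≤ ((d : ℝ) + 1) * (Wr + 1) * Br := by
      have hd1 : (d : ℝ) ≤ (d : ℝ) + 1 := by linarith
      have hBr0 : (0 : ℝ) ≤ Br := by positivity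
      have heR0 : (0 : ℝ) ≤ eR := by positivity
      nlinarith [heW, hWr0]
    have h3 : ((d : ℝ) + 1) * (Wr + 1) * Br ≤ ((d : ℝ) + 1) * (Wr + 1) * (β * Fc) := by
      apply mul_le_mul_of_nonneg_left hBr1.le
      positivity
    calc (d : ℝ) * eR ≤ ((d : ℝ) + 1) * (Wr + 1) * Br := h2
      _ ≤ ((d : ℝ) + 1) * (Wr + 1) * (β * Fc) := h3
      _ = (((d : ℝ) + 1) * (Wr + 1) * β) * Fc := by ring
      _ = (δ / 2) * Fc := by rw [hβe]
  have h3 : vR + (d : ℝ) * eR ≤ (c + δ) * Fc := by nlinarith [hv1, he1, hFc0]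
  -- choose δ'
  have hX0 : (0 : ℝ) ≤ Fc * (c + δ + d) := by
    apply mul_nonneg hFc0.le
    have : (0:ℝ) ≤ (d:ℝ) := Nat.cast_nonneg d
    linarith
  refine ⟨2 * k, min 1 (ε / (Fc * (c + δ + d) + 1)),
    lt_min one_pos (div_pos hε0 (by linarith)), ?_⟩
  intro Y hYne hYΩ
  set δ' : ℝ := min 1 (ε / (Fc * (c + δ + d) + 1)) with hδ'
  have hδ'2 : δ' ≤ ε / (Fc * (c + δ + d) + 1) := min_le_right _ _
  have hδ'0 : (0:ℝ) ≤ δ' := le_min (by linarith) (by positivity)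
  have hYc0 : (0 : ℝ) < (Y.card : ℝ) := by
    have : 0 < Y.card := Finset.card_pos.2 hYne
    exact_mod_cast this
  set Yc : ℝ := (Y.card : ℝ) with hYc
  set t : ℕ := (Y \ winter S (2 * k) Y).card with htdef
  have htcast : (t : ℝ) = Yc - ((winter S (2 * k) Y).card : ℝ) := by
    rw [htdef, Finset.card_sdiff_of_subset (winter_subset), hYc]
    have hle : (winter S (2 * k) Y).card ≤ Y.card := Finset.card_le_card winter_subset
    push_cast [Nat.cast_sub hle]
    ring
  have h4 : (t : ℝ) ≤ δ' * Yc := by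
    rw [htcast]
    have h := hYΩ
    have hexp : (1 - δ') * Yc = Yc - δ' * Yc := by ring
    rw [hYc] at h ⊢
    linarith [h]
  -- the master counting inequality
  have master := main_count (S := S) hsym A hA F₀ hk Y
  have masterR : Fc * (Module.finrank ℂ (VSpace A Y) : ℝ)
      ≤ (Yc + Fc * t) * (vR + d * eR) + d * (Fc * (Fc * t)) := by
    rw [hFc, hYc, hvR, heR]
    exact_mod_cast master
  have stepG : (Module.finrank ℂ (VSpace A Y) : ℝ) / Yc ≤ c + δ + ε := by
    have hres := real_arith Fc Yc (Module.finrank ℂ (VSpace A Y) : ℝ) vR eR (t : ℝ) c δ ε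
      (d : ℝ) δ' hFc0 hYc0 (Nat.cast_nonneg d) (Nat.cast_nonneg t) hcδ masterR h3 h4
      hδ'0 hδ'2 hε0
    exact hres
  -- conclude
  have h1ε : (0 : ℝ) < 1 - ε := by linarith
  have hinv : (1 - ε) * (1 - ε)⁻¹ = 1 := mul_inv_cancel₀ (ne_of_gt h1ε)
  have h9 : 1 ≤ (1 - ε)⁻¹ := by nlinarith [hinv, inv_pos.2 h1ε, hε0]
  have h10 : c + δ ≤ (1 - ε)⁻¹ * (c + δ) := le_mul_of_one_le_left hcδ h9
  calc (Module.finrank ℂ (VSpace A Y) : ℝ) / Yc ≤ c + δ + ε := stepG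
    _ ≤ (1 - ε)⁻¹ * (c + δ) + ε := by linarith
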